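/- Let n ≥ 2 and let L : ℝⁿ × ℝⁿ → ℝ be positively homogeneous of degree 1 in the second variable (L(x, t·v) = t·L(x,v) for all t > 0) and twice continuously differentiable on {(x,v) : v ≠ 0}. Suppose that for every x ∈ ℝⁿ and every v ≠ 0: (i) all second partial derivatives ∂²L/∂v_j∂v_i(x,v) vanish, and (ii) ∂²L/∂x_j∂v_i(x,v) = ∂²L/∂x_i∂v_j(x,v) for all i, j. Then there exists a continuously differentiable map b = (b₁,…,b_n) : ℝⁿ → ℝⁿ such that L(x,v) = Σ_i b_i(x)·v_i for all x ∈ ℝⁿ and all v ≠ 0, and ∂b_i/∂x_j = ∂b_j/∂x_i everywhere, i.e., L is a closed differential 1-form on ℝⁿ. -/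

import Mathlib

noncomputable section

lemma aux_const {E F : Type*} [NormedAddCommGroup E] [NormedSpace ℝ E]
    [NormedAddCommGroup F] [NormedSpace ℝ F] {f : E → F} {U : Set E}
    (hU : IsOpen U) (hconn : IsPreconnected U)
    (hdiff : ∀ z ∈ U, DifferentiableAt ℝ f z)
    (hderiv : ∀ z ∈ U, fderiv ℝ f z = 0)
    {x y : E} (hx : x ∈ U) (hy : y ∈ U) : f x = f y := by
  have key : ∀ z ∈ U, ∀ᶠ w in nhds z, f w = f z := by
    intro z hz
    obtain ⟨ε, hε, hball⟩ := Metric.isOpen_iff.1 hU z hz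
    filter_upwards [Metric.ball_mem_nhds z hε] with w hw
    exact (convex_ball z ε).is_const_of_fderivWithin_eq_zero
      (fun p hp => (hdiff p (hball hp)).differentiableWithinAt)
      (fun p hp => by
        rw [fderivWithin_of_isOpen Metric.isOpen_ball hp]
        exact hderiv p (hball hp))
      hw (Metric.mem_ball_self hε)
  set u : Set E := {z | z ∈ U ∧ f z = f x} with hu_def
  set v : Set E := {z | z ∈ U ∧ f z ≠ f x} with hv_def
  have hu : IsOpen u := by
    rw [isOpen_iff_eventually]
    rintro z ⟨hzU, hzf⟩
    filter_upwards [key z hzU, hU.eventually_mem hzU] with w hw hwU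
    exact ⟨hwU, hw.trans hzf⟩
  have hv : IsOpen v := by
    rw [isOpen_iff_eventually]
    rintro z ⟨hzU, hzf⟩
    filter_upwards [key z hzU, hU.eventually_mem hzU] with w hw hwU
    exact ⟨hwU, hw.symm ▸ hzf⟩
  have hsub : U ⊆ u ∪ v := by
    intro z hz
    by_cases h : f z = f x
    · exact Or.inl ⟨hz, h⟩
    · exact Or.inr ⟨hz, h⟩
  have hdisj : Disjoint u v := by
    rw [Set.disjoint_iff]
    rintro z ⟨⟨_, h1⟩, ⟨_, h2⟩⟩
    exact absurd h1 h2
  have := hconn.subset_left_of_subset_union hu hv hdisj hsub ⟨x, hx, hx, rfl⟩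
  exact (this hy).2.symm

lemma aux_decomp {n : ℕ} (w : Fin n → ℝ) :
    w = ∑ j, w j • (Pi.single j 1 : Fin n → ℝ) := by
  funext k
  simp [Pi.single_apply, Finset.sum_ite_eq, mul_comm]

theorem statement12 (n : ℕ) (hn : 2 ≤ n)
    (L : (Fin n → ℝ) × (Fin n → ℝ) → ℝ)
    (hhom : ∀ (x v : Fin n → ℝ) (t : ℝ), 0 < t → L (x, t • v) = t * L (x, v))
    (hC2 : ContDiffOn ℝ 2 L {p : (Fin n → ℝ) × (Fin n → ℝ) | p.2 ≠ 0})
    (hvv : ∀ (x v : Fin n → ℝ), v ≠ 0 → ∀ i j : Fin n,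
      fderiv ℝ (fun q => fderiv ℝ L q ((0 : Fin n → ℝ), Pi.single i 1)) (x, v)
        ((0 : Fin n → ℝ), Pi.single j 1) = 0)
    (hxv : ∀ (x v : Fin n → ℝ), v ≠ 0 → ∀ i j : Fin n,
      fderiv ℝ (fun q => fderiv ℝ L q ((0 : Fin n → ℝ), Pi.single i 1)) (x, v)
        (Pi.single j 1, (0 : Fin n → ℝ)) =
      fderiv ℝ (fun q => fderiv ℝ L q ((0 : Fin n → ℝ), Pi.single j 1)) (x, v)
        (Pi.single i 1, (0 : Fin n → ℝ))) :
    ∃ b : (Fin n → ℝ) → (Fin n → ℝ),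
      ContDiff ℝ 1 b ∧
      (∀ (x v : Fin n → ℝ), v ≠ 0 → L (x, v) = ∑ i, b x i * v i) ∧
      (∀ (x : Fin n → ℝ) (i j : Fin n),
        fderiv ℝ (fun y => b y i) x (Pi.single j 1) =
        fderiv ℝ (fun y => b y j) x (Pi.single i 1)) := by
  have hn0 : 0 < n := by omega
  haveI : NeZero n := ⟨by omega⟩
  set U : Set ((Fin n → ℝ) × (Fin n → ℝ)) := {p | p.2 ≠ 0} with hU_def
  have hUopen : IsOpen U := isOpen_compl_singleton.preimage continuous_snd
  set v₀ : Fin n → ℝ := fun _ => 1 with hv₀_def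
  have hv₀ : v₀ ≠ 0 := by
    intro h
    have := congrFun h (0 : Fin n)
    simp [hv₀_def] at this
  set G : Fin n → ((Fin n → ℝ) × (Fin n → ℝ)) → ℝ :=
    fun i q => fderiv ℝ L q ((0 : Fin n → ℝ), Pi.single i 1) with hG_def
  -- membership
  have hmem : ∀ (x v : Fin n → ℝ), v ≠ 0 → (x, v) ∈ U := fun x v hv => hv
  -- C¹ of G i on U
  have hG1 : ∀ i, ∀ p ∈ U, ContDiffAt ℝ 1 (G i) p := by
    intro i p hp
    have h2 : ContDiffAt ℝ 2 L p := hC2.contDiffAt (hUopen.mem_nhds hp)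
    have h1 : ContDiffAt ℝ 1 (fderiv ℝ L) p := h2.fderiv_right (by norm_num)
    exact h1.clm_apply contDiffAt_const
  have hGdiff : ∀ i, ∀ p ∈ U, DifferentiableAt ℝ (G i) p := by
    intro i p hp
    exact (hG1 i p hp).differentiableAt one_ne_zero
  -- constancy in v
  have hconst : ∀ (x : Fin n → ℝ) (i : Fin n) (v : Fin n → ℝ), v ≠ 0 →
      G i (x, v) = G i (x, v₀) := by
    intro x i v hv
    have hV : IsPreconnected ({(0 : Fin n → ℝ)}ᶜ : Set (Fin n → ℝ)) := by
      refine (isPathConnected_compl_singleton_of_one_lt_rank ?_ 0).isConnected.isPreconnected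
      rw [rank_fun']
      simp only [Fintype.card_fin]
      exact_mod_cast by exact_mod_cast Nat.one_lt_cast.mpr (by omega)
    have hVopen : IsOpen ({(0 : Fin n → ℝ)}ᶜ : Set (Fin n → ℝ)) := isOpen_compl_singleton
    have hdiff : ∀ z ∈ ({(0 : Fin n → ℝ)}ᶜ : Set (Fin n → ℝ)),
        DifferentiableAt ℝ (fun w => G i (x, w)) z := by
      intro z hz
      exact (hGdiff i (x, z) hz).comp z ((differentiableAt_const x).prodMk differentiableAt_id)
    have hderiv : ∀ z ∈ ({(0 : Fin n → ℝ)}ᶜ : Set (Fin n → ℝ)),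
        fderiv ℝ (fun w => G i (x, w)) z = 0 := by
      intro z hz
      have hinner : HasFDerivAt (fun w : Fin n → ℝ => ((x, w) : (Fin n → ℝ) × (Fin n → ℝ)))
          (ContinuousLinearMap.inr ℝ (Fin n → ℝ) (Fin n → ℝ)) z :=
        (hasFDerivAt_const x z).prodMk (hasFDerivAt_id z)
      have hcomp : HasFDerivAt (fun w => G i (x, w))
          ((fderiv ℝ (G i) (x, z)).comp (ContinuousLinearMap.inr ℝ (Fin n → ℝ) (Fin n → ℝ))) z :=
        ((hGdiff i (x, z) hz).hasFDerivAt).comp z hinner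
      rw [hcomp.fderiv]
      ext w
      simp only [ContinuousLinearMap.coe_comp', Function.comp_apply,
        ContinuousLinearMap.inr_apply, ContinuousLinearMap.zero_apply]
      have : ((0 : Fin n → ℝ), w) = ∑ j, w j • (((0 : Fin n → ℝ), Pi.single j 1) : (Fin n → ℝ) × (Fin n → ℝ)) := by
        rw [Prod.ext_iff, Prod.fst_sum, Prod.snd_sum]
        constructor
        · simp
        · simpa using aux_decomp w
      rw [this, map_sum]
      refine Finset.sum_eq_zero fun j _ => ?_
      rw [map_smul]
      rw [hvv x z hz i j]
      simp
    exact aux_const hVopen hV hdiff hderiv hv hv₀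
  set b : (Fin n → ℝ) → (Fin n → ℝ) := fun x i => G i (x, v₀) with hb_def
  refine ⟨b, ?_, ?_, ?_⟩
  · -- ContDiff 1 b
    rw [contDiff_pi]
    intro i
    rw [contDiff_iff_contDiffAt]
    intro x
    exact (hG1 i (x, v₀) (hmem x v₀ hv₀)).comp x (contDiffAt_id.prodMk contDiffAt_const)
  · -- Euler
    intro x v hv
    have hLd : DifferentiableAt ℝ L (x, v) :=
      ((hC2.contDiffAt (hUopen.mem_nhds (hmem x v hv))).differentiableAt (by norm_num))
    have hcurve : HasDerivAt (fun t : ℝ => ((x, t • v) : (Fin n → ℝ) × (Fin n → ℝ)))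
        ((0 : Fin n → ℝ), v) 1 :=
      (hasDerivAt_const 1 x).prodMk (by simpa using (hasDerivAt_id (1:ℝ)).smul_const v)
    have hLd' : HasFDerivAt L (fderiv ℝ L (x, v)) (x, (1:ℝ) • v) := by
      simpa using hLd.hasFDerivAt
    have hcomp : HasDerivAt (fun t : ℝ => L (x, t • v)) (fderiv ℝ L (x, v) (0, v)) 1 := by
      exact hLd'.comp_hasDerivAt 1 hcurve
    have heq : (fun t : ℝ => L (x, t • v)) =ᶠ[nhds 1] fun t => t * L (x, v) := by
      filter_upwards [isOpen_Ioi.mem_nhds (by norm_num : (1:ℝ) ∈ Set.Ioi (0:ℝ))] with t ht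
      exact hhom x v t ht
    have hcomp' : HasDerivAt (fun t : ℝ => t * L (x, v)) (fderiv ℝ L (x, v) (0, v)) 1 :=
      hcomp.congr_of_eventuallyEq heq.symm
    have hmul : HasDerivAt (fun t : ℝ => t * L (x, v)) (L (x, v)) 1 := by
      simpa using (hasDerivAt_id (1:ℝ)).mul_const (L (x, v))
    have hEuler : L (x, v) = fderiv ℝ L (x, v) ((0 : Fin n → ℝ), v) :=
      hmul.unique hcomp'
    rw [hEuler]
    have : ((0 : Fin n → ℝ), v) = ∑ j, v j • (((0 : Fin n → ℝ), Pi.single j 1) : (Fin n → ℝ) × (Fin n → ℝ)) := by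
      rw [Prod.ext_iff, Prod.fst_sum, Prod.snd_sum]
      constructor
      · simp
      · simpa using aux_decomp v
    rw [this, map_sum]
    refine Finset.sum_congr rfl fun j _ => ?_
    rw [map_smul]
    have : fderiv ℝ L (x, v) ((0 : Fin n → ℝ), Pi.single j 1) = b x j := by
      simpa [hb_def] using hconst x j v hv
    rw [this]
    simp [mul_comm]
  · -- symmetry
    intro x i j
    have hinner : HasFDerivAt (fun y : Fin n → ℝ => ((y, v₀) : (Fin n → ℝ) × (Fin n → ℝ)))
        (ContinuousLinearMap.inl ℝ (Fin n → ℝ) (Fin n → ℝ)) x :=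
      (hasFDerivAt_id x).prodMk (hasFDerivAt_const v₀ x)
    have key : ∀ k : Fin n, fderiv ℝ (fun y => b y k) x =
        (fderiv ℝ (G k) (x, v₀)).comp (ContinuousLinearMap.inl ℝ (Fin n → ℝ) (Fin n → ℝ)) := by
      intro k
      exact (((hGdiff k (x, v₀) (hmem x v₀ hv₀)).hasFDerivAt).comp x hinner).fderiv
    rw [key i, key j]
    simpa using hxv x v₀ hv₀ i j
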